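/- For any integer p ≥ 0 and integer q, the alternating sum ∑_k (-1)^k 2^{-k} C(p,k) C(2k, k-q) equals (-1)^q 2^{-p} C(p, (p+q)/2) if p+q is even, and 0 if p+q is odd. -/

import Mathlib

private def cc (n : ℕ) (k : ℤ) : ℤ := if 0 ≤ k then ((n.choose k.toNat : ℕ) : ℤ) else 0

private lemma cc_pascal (n : ℕ) (k : ℤ) : cc (n+1) k = cc n k + cc n (k-1) := by
  unfold cc
  rcases lt_trichotomy k 0 with h | h | h
  · rw [if_neg (by omega), if_neg (by omega), if_neg (by omega)]; ring
  · subst h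
    rw [if_pos le_rfl, if_pos le_rfl, if_neg (by omega)]
    simp
  · rw [if_pos (by omega), if_pos (by omega), if_pos (by omega)]
    have h1 : k.toNat = (k-1).toNat + 1 := by omega
    rw [h1, Nat.choose_succ_succ]
    push_cast; ring

private def ff (p : ℕ) (q : ℤ) (k : ℕ) : ℤ :=
  (-1 : ℤ) ^ k * 2 ^ (p - k) * (p.choose k) * cc (2 * k) ((k : ℤ) - q)

private lemma key (p : ℕ) (q : ℤ) (k : ℕ) (hk : k ≤ p) :
    ff (p+1) q (k+1) + ff p (q-1) k + ff p (q+1) k = 2 * ff p q (k+1) - 2 * ff p q k := by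
  have hc2 : cc (2*(k+1)) (((k+1:ℕ) : ℤ) - q)
      = cc (2*k) ((k:ℤ) - (q-1)) + 2 * cc (2*k) ((k:ℤ) - q) + cc (2*k) ((k:ℤ) - (q+1)) := by
    have h : 2*(k+1) = 2*k+1+1 := by ring
    rw [h, cc_pascal, cc_pascal, cc_pascal,
        show ((k+1:ℕ) : ℤ) - q = (k:ℤ) - (q-1) from by push_cast; ring,
        show (k:ℤ) - (q-1) - 1 = (k:ℤ) - q from by ring,
        show (k:ℤ) - q - 1 = (k:ℤ) - (q+1) from by ring]
    ring
  unfold ff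
  rw [hc2, Nat.succ_sub_succ, Nat.choose_succ_succ]
  rcases Nat.lt_or_ge k p with h | h
  · have he : p - k = (p - (k+1)) + 1 := by omega
    rw [he]
    push_cast
    ring
  · have hkp : k = p := le_antisymm hk h
    subst hkp
    rw [Nat.choose_succ_self]
    have h0 : k - (k+1) = 0 := by omega
    rw [Nat.sub_self, h0]
    push_cast
    ring

private def SS (p : ℕ) (q : ℤ) : ℤ := ∑ k ∈ Finset.range (p+1), ff p q k

private lemma SS_succ (p : ℕ) (q : ℤ) : SS (p+1) q = -(SS p (q-1) + SS p (q+1)) := by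
  have h1 : SS (p+1) q
      = (∑ k ∈ Finset.range (p+1), ff (p+1) q (k+1)) + ff (p+1) q 0 :=
    Finset.sum_range_succ' _ _
  have h2 : ∑ k ∈ Finset.range (p+1),
      (ff (p+1) q (k+1) + ff p (q-1) k + ff p (q+1) k)
      = ∑ k ∈ Finset.range (p+1), (2 * ff p q (k+1) - 2 * ff p q k) := by
    refine Finset.sum_congr rfl fun k hk => ?_
    exact key p q k (by simpa using Nat.lt_succ_iff.mp (Finset.mem_range.mp hk))
  have h3 : ∑ k ∈ Finset.range (p+1), (2 * ff p q (k+1) - 2 * ff p q k)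
      = 2 * ff p q (p+1) - 2 * ff p q 0 :=
    Finset.sum_range_sub (fun k => 2 * ff p q k) (p+1)
  have h4 : ff p q (p+1) = 0 := by
    unfold ff
    rw [Nat.choose_succ_self]
    push_cast; ring
  have h5 : ff (p+1) q 0 = 2 * ff p q 0 := by
    unfold ff
    simp only [Nat.sub_zero, Nat.choose_zero_right, pow_succ]
    push_cast; ring
  have h6 : SS p (q-1) + SS p (q+1)
      = ∑ k ∈ Finset.range (p+1), (ff p (q-1) k + ff p (q+1) k) := by
    rw [Finset.sum_add_distrib]; rfl
  have h7 : ∑ k ∈ Finset.range (p+1),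
        (ff (p+1) q (k+1) + ff p (q-1) k + ff p (q+1) k)
      = (∑ k ∈ Finset.range (p+1), ff (p+1) q (k+1))
        + ∑ k ∈ Finset.range (p+1), (ff p (q-1) k + ff p (q+1) k) := by
    rw [← Finset.sum_add_distrib]
    refine Finset.sum_congr rfl fun k _ => by ring
  have := h2
  rw [h7, h3] at this
  linarith [h1, h4, h5, h6, this]

private lemma sign_add_one (q : ℤ) : ((-1:ℤ))^((q+1).natAbs) = -(-1)^(q.natAbs) := by
  rcases Int.even_or_odd q with h | h
  · rw [Odd.neg_one_pow (Int.natAbs_odd.mpr (Even.add_one h)),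
        Even.neg_one_pow (Int.natAbs_even.mpr h)]
  · rw [Even.neg_one_pow (Int.natAbs_even.mpr (Odd.add_one h)),
        Odd.neg_one_pow (Int.natAbs_odd.mpr h)]
    norm_num

private def TT (p : ℕ) (q : ℤ) : ℤ :=
  if Even ((p:ℤ) + q) then (-1 : ℤ)^(q.natAbs) * cc p (((p:ℤ) + q)/2) else 0

private lemma TT_succ (p : ℕ) (q : ℤ) : TT (p+1) q = -(TT p (q-1) + TT p (q+1)) := by
  unfold TT
  push_cast
  by_cases h : Even ((p:ℤ) + 1 + q)
  · obtain ⟨r, hr⟩ := h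
    rw [if_pos ⟨r, hr⟩, if_pos (by exact ⟨r-1, by omega⟩ : Even ((p:ℤ) + (q-1))),
        if_pos (by exact ⟨r, by omega⟩ : Even ((p:ℤ) + (q+1)))]
    have e1 : ((p:ℤ) + 1 + q)/2 = r := by omega
    have e2 : ((p:ℤ) + (q-1))/2 = r - 1 := by omega
    have e3 : ((p:ℤ) + (q+1))/2 = r := by omega
    rw [e1, e2, e3, cc_pascal]
    have s1 : ((-1:ℤ))^((q+1).natAbs) = -(-1)^(q.natAbs) := sign_add_one q
    have s2 : ((-1:ℤ))^((q-1).natAbs) = -(-1)^(q.natAbs) := by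
      have := sign_add_one (q-1)
      rw [sub_add_cancel] at this
      linarith [this]
    rw [s1, s2]
    ring
  · rw [if_neg h, if_neg (fun hc => h ?_), if_neg (fun hc => h ?_)]
    · ring
    · rw [Int.even_iff] at hc ⊢; omega
    · rw [Int.even_iff] at hc ⊢; omega

private lemma base (q : ℤ) : SS 0 q = TT 0 q := by
  unfold SS TT ff cc
  rw [Finset.sum_range_one]
  simp only [pow_zero, Nat.sub_zero, Nat.choose_zero_right, Nat.cast_one, one_mul,
    Nat.cast_zero, zero_add, mul_zero, Nat.zero_sub]
  rcases lt_trichotomy q 0 with h | h | h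
  · rw [if_pos (by omega : (0:ℤ) ≤ 0 - q)]
    have h1 : ((0:ℤ) - q).toNat = (-q).toNat := by omega
    have h2 : 0 < (-q).toNat := by omega
    rw [h1, Nat.choose_eq_zero_of_lt h2]
    by_cases he : Even q
    · rw [if_pos he, if_neg ?_]
      · simp
      · rw [Int.even_iff] at he; omega
    · rw [if_neg he]; simp
  · subst h
    norm_num
  · rw [if_neg (by omega : ¬ (0:ℤ) ≤ 0 - q)]
    by_cases he : Even q
    · rw [if_pos he, if_pos ?_]
      · have h2 : 0 < ((q:ℤ)/2).toNat := by
          rw [Int.even_iff] at he; omega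
        rw [Nat.choose_eq_zero_of_lt h2]
        simp
      · rw [Int.even_iff] at he; omega
    · rw [if_neg he]

private lemma SS_eq_TT : ∀ p : ℕ, ∀ q : ℤ, SS p q = TT p q := by
  intro p
  induction p with
  | zero => exact base
  | succ n ih =>
    intro q
    rw [SS_succ, TT_succ, ih (q-1), ih (q+1)]


/-- Identity (attributed to Dawson): for `p ≥ 0` and any integer `q`,
`∑_k (-1)^k 2^{p-k} C(p,k) C(2k,k-q)` equals `(-1)^q C(p,(p+q)/2)` when
`p+q` is even and `0` when `p+q` is odd (binomials with out-of-range
arguments being zero). -/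
theorem dawson_identity (p : ℕ) (q : ℤ) :
    (∑ k ∈ Finset.range (p + 1),
      (-1 : ℤ) ^ k * 2 ^ (p - k) * (p.choose k) *
        (if 0 ≤ (k : ℤ) - q then (((2 * k).choose ((k : ℤ) - q).toNat : ℕ) : ℤ) else 0))
    = if Even ((p : ℤ) + q) then
        (-1 : ℤ) ^ q.natAbs *
          (if 0 ≤ (p : ℤ) + q then ((p.choose ((((p : ℤ) + q) / 2).toNat) : ℕ) : ℤ) else 0)
      else 0 := by
  have h : SS p q = TT p q := SS_eq_TT p q
  unfold SS TT ff cc at h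
  rw [h]
  by_cases he : Even ((p:ℤ) + q)
  · rw [if_pos he, if_pos he]
    congr 1
    by_cases h0 : 0 ≤ (p:ℤ) + q
    · rw [if_pos (by rw [Int.even_iff] at he; omega : (0:ℤ) ≤ ((p:ℤ)+q)/2), if_pos h0]
    · rw [if_neg (by rw [Int.even_iff] at he; omega : ¬ (0:ℤ) ≤ ((p:ℤ)+q)/2), if_neg h0]
  · rw [if_neg he, if_neg he]
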